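/- Let F be admissible on [0,∞). If for every k > 0 the function [0,∞) ∋ s ↦ F(k·e^{−s²}) is concave on [0,∞), then the function H : ℝ → ℝ defined by H(t) := F(e^t) is concave on ℝ. -/

import Mathlib

open Set
open Filter Topology

/-- An `EReal`-valued function `H` is concave on a convex set `S ⊆ ℝ`. -/
def ERealConcaveOn (S : Set ℝ) (H : ℝ → EReal) : Prop :=
  ∀ s ∈ S, ∀ t ∈ S, ∀ μ ∈ Set.Icc (0 : ℝ) 1,
    ((1 - μ : ℝ) : EReal) * H s + ((μ : ℝ) : EReal) * H t ≤ H ((1 - μ) * s + μ * t)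

theorem sqrt_tendsto_atTop' : Tendsto Real.sqrt atTop atTop := by
  apply tendsto_atTop_atTop.2
  intro b
  refine ⟨b ^ 2, fun a ha => ?_⟩
  calc b ≤ |b| := le_abs_self b
    _ = Real.sqrt (b ^ 2) := (Real.sqrt_sq_eq_abs b).symm
    _ ≤ Real.sqrt a := Real.sqrt_le_sqrt ha

/-- Lemma 4.2 (converse direction): let `F` be admissible on `[0,∞)`. If for every `k > 0`
the function `s ↦ F(k e^{-s²})` is concave on `[0,∞)`, then `H(t) = F(e^t)` is concave on `ℝ`. -/
theorem stmt_12 (F : ℝ → EReal)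
    (hFcont : ContinuousOn F (Ioi (0 : ℝ))) (hFmono : StrictMonoOn F (Ici (0 : ℝ)))
    (hk : ∀ k > (0 : ℝ), ERealConcaveOn (Ici (0 : ℝ)) (fun s => F (k * Real.exp (-s ^ 2)))) :
    ERealConcaveOn univ (fun t => F (Real.exp t)) := by
  intro s _ t _ μ hμ
  set m := (1 - μ) * s + μ * t with hm
  set M := max s t with hM
  set d : ℝ → ℝ := fun L => Real.sqrt (L - s) - Real.sqrt (L - t) with hd_def
  set g : ℝ → ℝ := fun L => m + μ * (1 - μ) * (d L) ^ 2 with hg_def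
  have key : ∀ᶠ L in atTop,
      ((1 - μ : ℝ) : EReal) * F (Real.exp s) + ((μ : ℝ) : EReal) * F (Real.exp t)
        ≤ F (Real.exp (g L)) := by
    filter_upwards [eventually_ge_atTop M] with L hL
    have hs' : (0:ℝ) ≤ L - s := by
      have : s ≤ M := le_max_left _ _
      linarith
    have ht' : (0:ℝ) ≤ L - t := by
      have : t ≤ M := le_max_right _ _
      linarith
    set a := Real.sqrt (L - s) with ha_def
    set b := Real.sqrt (L - t) with hb_def
    have ha : a ^ 2 = L - s := Real.sq_sqrt hs'
    have hb : b ^ 2 = L - t := Real.sq_sqrt ht'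
    have h1 := hk (Real.exp L) (Real.exp_pos L) a (Real.sqrt_nonneg _) b (Real.sqrt_nonneg _) μ hμ
    simp only at h1
    have e1 : Real.exp L * Real.exp (-a ^ 2) = Real.exp s := by
      rw [← Real.exp_add]; congr 1; rw [ha]; ring
    have e2 : Real.exp L * Real.exp (-b ^ 2) = Real.exp t := by
      rw [← Real.exp_add]; congr 1; rw [hb]; ring
    have e3 : Real.exp L * Real.exp (-((1 - μ) * a + μ * b) ^ 2) = Real.exp (g L) := by
      rw [← Real.exp_add]; congr 1
      simp only [hg_def, hd_def, hm, ← ha_def, ← hb_def]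
      linear_combination (μ - 1) * ha - μ * hb
    rw [e1, e2, e3] at h1
    exact h1
  have hd0 : Tendsto d atTop (𝓝 0) := by
    apply squeeze_zero_norm' (a := fun L => |t - s| / Real.sqrt (L - M))
    · filter_upwards [eventually_ge_atTop (M + 1)] with L hL
      have hs' : (0:ℝ) ≤ L - s := by
        have : s ≤ M := le_max_left _ _; linarith
      have ht' : (0:ℝ) ≤ L - t := by
        have : t ≤ M := le_max_right _ _; linarith
      set a := Real.sqrt (L - s) with ha_def
      set b := Real.sqrt (L - t) with hb_def
      have ha : a ^ 2 = L - s := Real.sq_sqrt hs'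
      have hb : b ^ 2 = L - t := Real.sq_sqrt ht'
      have hsq : Real.sqrt (L - M) ≤ a + b := by
        have h1 : Real.sqrt (L - M) ≤ a := by
          apply Real.sqrt_le_sqrt
          have : s ≤ M := le_max_left _ _
          linarith
        have : 0 ≤ b := Real.sqrt_nonneg _
        linarith
      have hpos : 0 < Real.sqrt (L - M) := by
        apply Real.sqrt_pos.2; linarith
      have habpos : 0 < a + b := lt_of_lt_of_le hpos hsq
      have hdL : d L = (t - s) / (a + b) := by
        rw [eq_div_iff habpos.ne']
        simp only [hd_def, ← ha_def, ← hb_def]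
        linear_combination ha - hb
      rw [Real.norm_eq_abs, hdL, abs_div, abs_of_pos habpos]
      exact div_le_div_of_nonneg_left (abs_nonneg _) hpos hsq
    · apply Tendsto.div_atTop tendsto_const_nhds
      apply sqrt_tendsto_atTop'.comp
      convert tendsto_atTop_add_const_right atTop (-M) tendsto_id using 1
      funext x; simp only [id]; ring
  have hg0 : Tendsto g atTop (𝓝 m) := by
    have h2 : Tendsto (fun L => μ * (1 - μ) * (d L) ^ 2) atTop (𝓝 0) := by
      have := (hd0.pow 2).const_mul (μ * (1 - μ))
      simpa using this
    simpa using tendsto_const_nhds.add h2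
  have hexp : Tendsto (fun L => Real.exp (g L)) atTop (𝓝 (Real.exp m)) := (Real.continuous_exp.tendsto m).comp hg0
  have hFt : Tendsto (fun L => F (Real.exp (g L))) atTop (𝓝 (F (Real.exp m))) := by
    apply (hFcont _ (Real.exp_pos m)).tendsto.comp
    apply tendsto_nhdsWithin_of_tendsto_nhds_of_eventually_within _ hexp
    exact Eventually.of_forall fun L => Real.exp_pos _
  exact ge_of_tendsto hFt key
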